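/- (Gyöngy–Krylov characterization of convergence in probability.) Let X be a Polish space equipped with its Borel σ-algebra, and let (Y_n)_{n∈ℕ} be X-valued random variables on a probability space (Ω, ℱ, ℙ). Then (Y_n) converges in probability to some X-valued random variable if and only if the following holds: for every pair of subsequences (Y_{n_k}) and (Y_{m_k}), there exists a further subsequence along which the joint laws of (Y_{n_k}, Y_{m_k}) (probability measures on X × X) converge weakly to a probability measure μ on X × X satisfying μ({(x,y) ∈ X × X : x = y}) = 1. -/

import Mathlib

open MeasureTheory Filter

noncomputable section

private lemma gk_forward
    (X : Type*) [MetricSpace X] [TopologicalSpace.SeparableSpace X] [CompleteSpace X]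
    [MeasurableSpace X] [BorelSpace X]
    (Ω : Type*) [MeasurableSpace Ω] (P : Measure Ω) [IsProbabilityMeasure P]
    (Y : ℕ → Ω → X) (hY : ∀ n, Measurable (Y n))
    (Z : Ω → X) (hZm : Measurable Z) (hZc : TendstoInMeasure P Y atTop Z)
    (n m : ℕ → ℕ) (hn : StrictMono n) (hm : StrictMono m) :
    ∃ φ : ℕ → ℕ, StrictMono φ ∧
        ∃ μ : Measure (X × X), IsProbabilityMeasure μ ∧
          μ {q : X × X | q.1 = q.2} = 1 ∧
          ∀ F : BoundedContinuousFunction (X × X) ℝ,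
            Tendsto (fun k => ∫ ω, F (Y (n (φ k)) ω, Y (m (φ k)) ω) ∂P)
              atTop (nhds (∫ q, F q ∂μ)) := by
  have : SecondCountableTopology X := UniformSpace.secondCountable_of_separable X
  have hcn : TendstoInMeasure P (fun k => Y (n k)) atTop Z :=
    fun ε hε => (hZc ε hε).comp hn.tendsto_atTop
  obtain ⟨φ₁, hφ₁, hae₁⟩ := hcn.exists_seq_tendsto_ae
  have hcm : TendstoInMeasure P (fun k => Y (m (φ₁ k))) atTop Z :=
    fun ε hε => (hZc ε hε).comp (hm.comp hφ₁).tendsto_atTop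
  obtain ⟨φ₂, hφ₂, hae₂⟩ := hcm.exists_seq_tendsto_ae
  refine ⟨φ₁ ∘ φ₂, hφ₁.comp hφ₂, Measure.map (fun ω => (Z ω, Z ω)) P, ?_, ?_, ?_⟩
  · exact Measure.isProbabilityMeasure_map (hZm.prodMk hZm).aemeasurable
  · rw [Measure.map_apply (hZm.prodMk hZm)
      (isClosed_eq continuous_fst continuous_snd).measurableSet]
    simp
  · intro F
    have hZZ : AEStronglyMeasurable (fun q : X × X => F q) (Measure.map (fun ω => (Z ω, Z ω)) P) :=
      F.continuous.measurable.aestronglyMeasurable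
    rw [integral_map (hZm.prodMk hZm).aemeasurable hZZ]
    have hae : ∀ᵐ ω ∂P, Tendsto (fun k => F (Y (n (φ₁ (φ₂ k))) ω, Y (m (φ₁ (φ₂ k))) ω))
        atTop (nhds (F (Z ω, Z ω))) := by
      filter_upwards [hae₁, hae₂] with ω h1 h2
      exact (F.continuous.tendsto _).comp ((h1.comp hφ₂.tendsto_atTop).prodMk_nhds h2)
    exact tendsto_integral_of_dominated_convergence (fun _ => ‖F‖)
      (fun k => (F.continuous.measurable.comp ((hY _).prodMk (hY _))).aestronglyMeasurable)
      (integrable_const _)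
      (fun k => Eventually.of_forall fun ω => F.norm_coe_le_norm _)
      hae

private lemma gk_cauchy
    (X : Type*) [MetricSpace X] [TopologicalSpace.SeparableSpace X] [CompleteSpace X]
    [MeasurableSpace X] [BorelSpace X]
    (Ω : Type*) [MeasurableSpace Ω] (P : Measure Ω) [IsProbabilityMeasure P]
    (Y : ℕ → Ω → X) (hY : ∀ n, Measurable (Y n))
    (h : ∀ n m : ℕ → ℕ, StrictMono n → StrictMono m →
        ∃ φ : ℕ → ℕ, StrictMono φ ∧
        ∃ μ : Measure (X × X), IsProbabilityMeasure μ ∧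
          μ {q : X × X | q.1 = q.2} = 1 ∧
          ∀ F : BoundedContinuousFunction (X × X) ℝ,
            Tendsto (fun k => ∫ ω, F (Y (n (φ k)) ω, Y (m (φ k)) ω) ∂P)
              atTop (nhds (∫ q, F q ∂μ))) :
    ∀ ε : ℝ, 0 < ε → ∀ δ : ENNReal, 0 < δ →
      ∃ N, ∀ p ≥ N, ∀ q ≥ N, P {ω | ε ≤ dist (Y p ω) (Y q ω)} < δ := by
  have : SecondCountableTopology X := UniformSpace.secondCountable_of_separable X
  by_contra hcon
  push_neg at hcon
  obtain ⟨ε, hε, δ, hδ, hN⟩ := hcon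
  -- build strictly monotone sequences n m with δ ≤ P {ε ≤ dist (Y (n k)) (Y (m k))}
  choose p hp q hq hbig using hN
  let f : ℕ → ℕ × ℕ := fun k => Nat.rec (p 0, q 0)
    (fun _ pr => (p (max pr.1 pr.2 + 1), q (max pr.1 pr.2 + 1))) k
  have hf1 : ∀ k, (f k).1 < (f (k+1)).1 := fun k =>
    lt_of_lt_of_le (lt_of_le_of_lt (le_max_left _ _) (Nat.lt_succ_self _)) (hp _)
  have hf2 : ∀ k, (f k).2 < (f (k+1)).2 := fun k =>
    lt_of_lt_of_le (lt_of_le_of_lt (le_max_right _ _) (Nat.lt_succ_self _)) (hq _)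
  have hfbig : ∀ k, δ ≤ P {ω | ε ≤ dist (Y ((f k).1) ω) (Y ((f k).2) ω)} := by
    intro k
    cases k with
    | zero => exact hbig 0
    | succ k => exact hbig _
  obtain ⟨φ, hφ, μ, hμP, hμd, hw⟩ := h (fun k => (f k).1) (fun k => (f k).2)
    (strictMono_nat_of_lt_succ hf1) (strictMono_nat_of_lt_succ hf2)
  -- the probability measures
  set g : ℕ → Ω → X × X := fun k ω => (Y ((f (φ k)).1) ω, Y ((f (φ k)).2) ω) with hg
  have hgm : ∀ k, Measurable (g k) := fun k => (hY _).prodMk (hY _)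
  let μs : ℕ → ProbabilityMeasure (X × X) := fun k =>
    ⟨Measure.map (g k) P, Measure.isProbabilityMeasure_map (hgm k).aemeasurable⟩
  have hμsT : Tendsto μs atTop (nhds (⟨μ, hμP⟩ : ProbabilityMeasure (X × X))) := by
    refine ProbabilityMeasure.tendsto_iff_forall_integral_tendsto.mpr ?_
    intro F
    have : ∀ k, ∫ x, F x ∂(μs k : Measure (X × X)) = ∫ ω, F (g k ω) ∂P := fun k =>
      integral_map (hgm k).aemeasurable F.continuous.measurable.aestronglyMeasurable
    simp_rw [this]
    exact hw F
  set C : Set (X × X) := {x | ε ≤ dist x.1 x.2} with hC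
  have hCc : IsClosed C := isClosed_le continuous_const (continuous_fst.dist continuous_snd)
  have hμC : μ C = 0 := by
    have hsub : C ⊆ {q : X × X | q.1 = q.2}ᶜ := by
      rintro ⟨a, b⟩ hx hxd
      simp only [Set.mem_setOf_eq] at hxd
      subst hxd
      have : ε ≤ dist a a := hx
      rw [dist_self] at this
      linarith
    refine le_antisymm (le_trans (measure_mono hsub) ?_) zero_le
    rw [measure_compl (isClosed_eq continuous_fst continuous_snd).measurableSet
      (measure_ne_top μ _), hμd]
    simp
  have hlimsup : (atTop.limsup fun k => (μs k : Measure (X × X)) C) ≤ 0 := by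
    have := ProbabilityMeasure.limsup_measure_closed_le_of_tendsto hμsT hCc
    simpa [hμC] using this
  have hge : δ ≤ atTop.limsup fun k => (μs k : Measure (X × X)) C := by
    refine le_limsup_of_frequently_le (Frequently.of_forall fun k => ?_)
    show δ ≤ (Measure.map (g k) P) C
    rw [Measure.map_apply (hgm k) hCc.measurableSet]
    exact hfbig (φ k)
  exact absurd (le_trans hge hlimsup) (by simpa using hδ.ne')

private lemma gk_complete
    (X : Type*) [MetricSpace X] [TopologicalSpace.SeparableSpace X] [CompleteSpace X]
    [MeasurableSpace X] [BorelSpace X]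
    (Ω : Type*) [MeasurableSpace Ω] (P : Measure Ω) [IsProbabilityMeasure P]
    (Y : ℕ → Ω → X) (hY : ∀ n, Measurable (Y n))
    (hcau : ∀ ε : ℝ, 0 < ε → ∀ δ : ENNReal, 0 < δ →
      ∃ N, ∀ p ≥ N, ∀ q ≥ N, P {ω | ε ≤ dist (Y p ω) (Y q ω)} < δ) :
    ∃ Z : Ω → X, Measurable Z ∧ TendstoInMeasure P Y atTop Z := by
  -- choose rapidly Cauchy subsequence
  have hstep : ∀ k : ℕ, ∃ N, ∀ p ≥ N, ∀ q ≥ N,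
      P {ω | (2:ℝ)⁻¹ ^ k ≤ dist (Y p ω) (Y q ω)} < (2:ENNReal)⁻¹ ^ k := by
    intro k
    exact hcau _ (by positivity) _ (ENNReal.pow_pos (ENNReal.inv_pos.mpr (by norm_num : (2:ENNReal) ≠ ⊤)) k)
  choose N hN using hstep
  let ψ : ℕ → ℕ := fun k => Nat.rec (N 0) (fun k pr => max (N (k+1)) (pr + 1)) k
  have hψmono : StrictMono ψ := strictMono_nat_of_lt_succ fun k =>
    lt_of_lt_of_le (Nat.lt_succ_self _) (le_max_right _ _)
  have hψN : ∀ k, N k ≤ ψ k := by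
    intro k
    cases k with
    | zero => exact le_refl _
    | succ k => exact le_max_left _ _
  -- Borel-Cantelli
  set S : ℕ → Set Ω := fun k => {ω | (2:ℝ)⁻¹ ^ k ≤ dist (Y (ψ k) ω) (Y (ψ (k+1)) ω)} with hS
  have hSle : ∀ k, P (S k) ≤ (2:ENNReal)⁻¹ ^ k := fun k =>
    (hN k (ψ k) (hψN k) (ψ (k+1)) (le_trans (hψN k) (hψmono.le_iff_le.mpr (Nat.le_succ k)))).le
  have hPlimsup : P (atTop.limsup S) = 0 := by
    refine measure_limsup_atTop_eq_zero (ne_top_of_le_ne_top ?_ (ENNReal.tsum_le_tsum hSle))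
    simpa only [ENNReal.tsum_geometric, ENNReal.one_sub_inv_two, inv_inv] using (by norm_num : (2:ENNReal) ≠ ⊤)
  have hae : ∀ᵐ ω ∂P, ∃ l : X, Tendsto (fun k => Y (ψ k) ω) atTop (nhds l) := by
    have hcompl : ∀ ω ∈ (atTop.limsup S)ᶜ, ∃ l : X,
        Tendsto (fun k => Y (ψ k) ω) atTop (nhds l) := by
      intro ω hω
      rw [limsup_eq_iInf_iSup_of_nat] at hω
      simp only [Set.iSup_eq_iUnion, Set.iInf_eq_iInter, Set.compl_iInter, Set.compl_iUnion,
        Set.mem_iUnion, Set.mem_iInter, Set.mem_compl_iff] at hω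
      obtain ⟨K, hK⟩ := hω
      have hback : ∀ k, dist (Y (ψ (k + K)) ω) (Y (ψ (k + K + 1)) ω) < (2:ℝ)⁻¹ ^ (k + K) := by
        intro k
        have := hK (k + K) (Nat.le_add_left K k)
        simp only [hS, Set.mem_setOf_eq, not_le] at this
        exact this
      have hsum : Summable (fun k => dist (Y (ψ k) ω) (Y (ψ (k+1)) ω)) := by
        rw [← summable_nat_add_iff K]
        refine Summable.of_nonneg_of_le (fun k => dist_nonneg) (fun k => (hback k).le) ?_
        have : Summable (fun k : ℕ => (2:ℝ)⁻¹ ^ K * (2:ℝ)⁻¹ ^ k) :=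
          (summable_geometric_of_lt_one (by norm_num) (by norm_num)).mul_left _
        refine this.congr fun k => ?_
        rw [← pow_add, add_comm]
      have : CauchySeq (fun k => Y (ψ k) ω) := cauchySeq_of_summable_dist hsum
      exact cauchySeq_tendsto_of_complete this
    have : (atTop.limsup S)ᶜ ∈ ae P := by
      rw [mem_ae_iff, compl_compl]
      exact hPlimsup
    filter_upwards [this] with ω hω using hcompl ω hω
  obtain ⟨Z, hZm, hZae⟩ := measurable_limit_of_tendsto_metrizable_ae
    (fun k => (hY (ψ k)).aemeasurable) hae
  refine ⟨Z, hZm, ?_⟩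
  have hsub : TendstoInMeasure P (fun k => Y (ψ k)) atTop Z :=
    tendstoInMeasure_of_tendsto_ae (fun k => (hY (ψ k)).aestronglyMeasurable) hZae
  -- conclude for the full sequence
  refine tendstoInMeasure_iff_dist.mpr ?_
  intro ε hε
  rw [ENNReal.tendsto_atTop_zero]
  intro δ hδ
  obtain ⟨N₁, hN₁⟩ := hcau (ε/2) (by linarith) (δ/2) (ENNReal.half_pos hδ.ne')
  obtain ⟨K, hK⟩ := ENNReal.tendsto_atTop_zero.mp (tendstoInMeasure_iff_dist.mp hsub (ε/2) (by linarith)) (δ/2)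
    (ENNReal.half_pos hδ.ne')
  set k₀ := max K N₁ with hk₀
  have hψk₀ : N₁ ≤ ψ k₀ := le_trans (le_max_right K N₁) hψmono.le_apply
  refine ⟨N₁, fun j hj => ?_⟩
  have hsubset : {ω | ε ≤ dist (Y j ω) (Z ω)} ⊆
      {ω | ε/2 ≤ dist (Y j ω) (Y (ψ k₀) ω)} ∪ {ω | ε/2 ≤ dist (Y (ψ k₀) ω) (Z ω)} := by
    intro ω hω
    rw [Set.mem_union]
    by_contra hc
    push_neg at hc
    simp only [Set.mem_setOf_eq, not_le] at hc hω
    have := dist_triangle (Y j ω) (Y (ψ k₀) ω) (Z ω)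
    linarith [hc.1, hc.2]
  calc P {ω | ε ≤ dist (Y j ω) (Z ω)}
      ≤ P {ω | ε/2 ≤ dist (Y j ω) (Y (ψ k₀) ω)} + P {ω | ε/2 ≤ dist (Y (ψ k₀) ω) (Z ω)} :=
        le_trans (measure_mono hsubset) (measure_union_le _ _)
    _ ≤ δ/2 + δ/2 := add_le_add (hN₁ j hj (ψ k₀) hψk₀).le (hK k₀ (le_max_left K N₁))
    _ = δ := ENNReal.add_halves δ

theorem gyongy_krylov
    (X : Type*) [MetricSpace X] [TopologicalSpace.SeparableSpace X] [CompleteSpace X]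
    [MeasurableSpace X] [BorelSpace X]
    (Ω : Type*) [MeasurableSpace Ω] (P : Measure Ω) [IsProbabilityMeasure P]
    (Y : ℕ → Ω → X) (hY : ∀ n, Measurable (Y n)) :
    (∃ Z : Ω → X, Measurable Z ∧ TendstoInMeasure P Y atTop Z)
    ↔ (∀ n m : ℕ → ℕ, StrictMono n → StrictMono m →
        ∃ φ : ℕ → ℕ, StrictMono φ ∧
        ∃ μ : Measure (X × X), IsProbabilityMeasure μ ∧
          μ {q : X × X | q.1 = q.2} = 1 ∧
          ∀ F : BoundedContinuousFunction (X × X) ℝ,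
            Tendsto (fun k => ∫ ω, F (Y (n (φ k)) ω, Y (m (φ k)) ω) ∂P)
              atTop (nhds (∫ q, F q ∂μ))) := by
  constructor
  · rintro ⟨Z, hZm, hZc⟩ n m hn hm
    exact gk_forward X Ω P Y hY Z hZm hZc n m hn hm
  · intro h
    exact gk_complete X Ω P Y hY (gk_cauchy X Ω P Y hY h)
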